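/- Let f be a nonzero complex polynomial whose values f(n) have positive real part for all sufficiently large natural numbers n, and let m ≥ 0 be an integer. Then the function n ↦ ∑_{k=0}^{n} C(n,k) m^k f(n-k) is not eventually alternating; in fact for all sufficiently large n its real part is positive. -/

import Mathlib

open Finset

theorem binomial_sum_eventually_positive (f : Polynomial ℂ) (hf : f ≠ 0) (m : ℕ)
    (N₀ : ℕ) (hpos : ∀ n ≥ N₀, 0 < (f.eval (n : ℂ)).re) :
    ∃ N : ℕ, ∀ n ≥ N,
      0 < (∑ k ∈ range (n + 1), (n.choose k : ℂ) * (m : ℂ) ^ k *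
        f.eval ((n - k : ℕ) : ℂ)).re := by
  set r : ℕ → ℝ := fun j => (f.eval (j : ℂ)).re with hrdef
  -- rewrite the real part of the sum as a real sum, reflected (j = n - k)
  have key : ∀ n : ℕ, (∑ k ∈ range (n + 1), (n.choose k : ℂ) * (m : ℂ) ^ k *
      f.eval ((n - k : ℕ) : ℂ)).re
      = ∑ j ∈ range (n + 1), ((n.choose j * m ^ (n - j) : ℕ) : ℝ) * r j := by
    intro n
    have hrefl := Finset.sum_range_reflect
      (fun k => ((n.choose k : ℂ) * (m : ℂ) ^ k * f.eval ((n - k : ℕ) : ℂ)).re) (n + 1)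
    rw [Complex.re_sum, ← hrefl]
    apply Finset.sum_congr rfl
    intro j hj
    rw [Finset.mem_range] at hj
    have hj' : j ≤ n := Nat.lt_succ_iff.mp hj
    have e1 : n + 1 - 1 - j = n - j := by omega
    have e2 : n - (n - j) = j := by omega
    simp only [e1, e2, Nat.choose_symm hj']
    have e3 : (n.choose j : ℂ) * (m : ℂ) ^ (n - j)
        = (((n.choose j * m ^ (n - j) : ℕ) : ℝ) : ℂ) := by push_cast; ring
    rw [e3, Complex.re_ofReal_mul]
  rcases Nat.eq_zero_or_pos m with hm | hm
  · -- m = 0 : only the j = n term survives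
    subst hm
    refine ⟨N₀, fun n hn => ?_⟩
    rw [key n]
    rw [Finset.sum_eq_single n]
    · simpa using hpos n hn
    · intro j hjmem hjne
      rw [Finset.mem_range] at hjmem
      have : n - j ≠ 0 := by omega
      simp [this]
    · intro h
      exact absurd (Finset.self_mem_range_succ n) h
  · -- m ≥ 1
    set N₁ : ℕ := N₀ + 1 with hN₁
    have hc : 0 < r N₁ := hpos N₁ (by omega)
    set c : ℝ := r N₁ with hcdef
    set B : ℝ := ∑ j ∈ range N₁, |r j| with hBdef
    obtain ⟨M, hM⟩ := exists_nat_gt ((B * (m : ℝ) ^ N₁ * 2 ^ N₁ * (Nat.factorial N₁ : ℝ)) / c)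
    refine ⟨2 * N₁ + M + 1, fun n hn => ?_⟩
    have hnN₁ : N₁ ≤ n := by omega
    have hn1 : 1 ≤ n := by omega
    rw [key n]
    -- split the sum
    have hsplit : ∑ j ∈ range (n + 1), ((n.choose j * m ^ (n - j) : ℕ) : ℝ) * r j
        = (∑ j ∈ range N₁, ((n.choose j * m ^ (n - j) : ℕ) : ℝ) * r j)
        + ∑ j ∈ Finset.Ico N₁ (n + 1), ((n.choose j * m ^ (n - j) : ℕ) : ℝ) * r j := by
      simp only [Finset.range_eq_Ico]
      exact (Finset.sum_Ico_consecutive (fun j => ((n.choose j * m ^ (n - j) : ℕ) : ℝ) * r j) (Nat.zero_le N₁) (by omega : N₁ ≤ n + 1)).symm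
    rw [hsplit]
    -- the good part is at least the single term j = N₁
    have hgood : ((n.choose N₁ * m ^ (n - N₁) : ℕ) : ℝ) * c
        ≤ ∑ j ∈ Finset.Ico N₁ (n + 1), ((n.choose j * m ^ (n - j) : ℕ) : ℝ) * r j := by
      rw [hcdef]
      refine Finset.single_le_sum
        (f := fun j => ((n.choose j * m ^ (n - j) : ℕ) : ℝ) * r j) ?_ ?_
      · intro j hjmem
        rw [Finset.mem_Ico] at hjmem
        exact mul_nonneg (Nat.cast_nonneg _) (le_of_lt (hpos j (by omega)))
      · rw [Finset.mem_Ico]; omega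
    -- the bad part is bounded below
    set K : ℝ := ((n ^ N₀ * m ^ n : ℕ) : ℝ) with hKdef
    have hbad : -(K * B) ≤ ∑ j ∈ range N₁, ((n.choose j * m ^ (n - j) : ℕ) : ℝ) * r j := by
      have heq : -(K * B) = ∑ j ∈ range N₁, -(K * |r j|) := by
        rw [hBdef, Finset.mul_sum, ← Finset.sum_neg_distrib]
      rw [heq]
      apply Finset.sum_le_sum
      intro j hjmem
      rw [Finset.mem_range] at hjmem
      have hcoeff : ((n.choose j * m ^ (n - j) : ℕ) : ℝ) ≤ K := by
        rw [hKdef]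
        have h1 : n.choose j * m ^ (n - j) ≤ n ^ N₀ * m ^ n := by
          apply Nat.mul_le_mul
          · exact le_trans (Nat.choose_le_pow n j) (Nat.pow_le_pow_right hn1 (by omega))
          · exact Nat.pow_le_pow_right hm (Nat.sub_le n j)
        exact_mod_cast h1
      have h0 : (0 : ℝ) ≤ ((n.choose j * m ^ (n - j) : ℕ) : ℝ) := Nat.cast_nonneg _
      have ha := mul_le_mul_of_nonneg_left (neg_abs_le (r j)) h0
      have hb := mul_le_mul_of_nonneg_right hcoeff (abs_nonneg (r j))
      nlinarith
    -- the crucial size comparison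
    have hKB : K * B < ((n.choose N₁ * m ^ (n - N₁) : ℕ) : ℝ) * c := by
      have hmpos : (0 : ℝ) < (m : ℝ) := by exact_mod_cast hm
      have hfacpos : (0 : ℝ) < (2 : ℝ) ^ N₁ * (Nat.factorial N₁ : ℝ) := by positivity
      have hnpow0 : (1 : ℝ) ≤ (n : ℝ) ^ N₀ := one_le_pow₀ (by exact_mod_cast hn1)
      -- main polynomial inequality: B * n^N₀ * m^N₁ < c * choose n N₁
      have hG : B * (n : ℝ) ^ N₀ * (m : ℝ) ^ N₁ < c * (n.choose N₁ : ℝ) := by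
        have h3 : B * (m : ℝ) ^ N₁ * 2 ^ N₁ * (Nat.factorial N₁ : ℝ) < c * n := by
          rw [div_lt_iff₀ hc] at hM
          calc B * (m : ℝ) ^ N₁ * 2 ^ N₁ * (Nat.factorial N₁ : ℝ) < M * c := hM
            _ ≤ n * c := by
                have : (M : ℝ) ≤ n := by exact_mod_cast (by omega : M ≤ n)
                exact mul_le_mul_of_nonneg_right this hc.le
            _ = c * n := by ring
        -- choose lower bound
        have hcb : ((n + 1 - N₁ : ℕ) ^ N₁ : ℝ) ≤ (Nat.factorial N₁ : ℝ) * (n.choose N₁ : ℝ) := by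
          have := Nat.pow_le_choose (α := ℝ) N₁ n
          rw [div_le_iff₀ (by exact_mod_cast N₁.factorial_pos)] at this
          calc ((n + 1 - N₁ : ℕ) ^ N₁ : ℝ) ≤ (n.choose N₁ : ℝ) * (Nat.factorial N₁ : ℝ) := by
                exact_mod_cast this
            _ = (Nat.factorial N₁ : ℝ) * (n.choose N₁ : ℝ) := by ring
        have hhalf : (n : ℝ) ≤ 2 * ((n + 1 - N₁ : ℕ) : ℝ) := by
          have : n ≤ 2 * (n + 1 - N₁) := by omega
          exact_mod_cast this
        have hpw : (n : ℝ) ^ N₁ ≤ 2 ^ N₁ * ((n + 1 - N₁ : ℕ) ^ N₁ : ℝ) := by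
          calc (n : ℝ) ^ N₁ ≤ (2 * ((n + 1 - N₁ : ℕ) : ℝ)) ^ N₁ :=
                pow_le_pow_left₀ (Nat.cast_nonneg n) hhalf N₁
            _ = 2 ^ N₁ * ((n + 1 - N₁ : ℕ) ^ N₁ : ℝ) := by
                push_cast; ring
        have hA : (n : ℝ) ^ N₁ ≤ 2 ^ N₁ * (Nat.factorial N₁ : ℝ) * (n.choose N₁ : ℝ) := by
          calc (n : ℝ) ^ N₁ ≤ 2 ^ N₁ * ((n + 1 - N₁ : ℕ) ^ N₁ : ℝ) := hpw
            _ ≤ 2 ^ N₁ * ((Nat.factorial N₁ : ℝ) * (n.choose N₁ : ℝ)) := by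
                exact mul_le_mul_of_nonneg_left hcb (by positivity)
            _ = 2 ^ N₁ * (Nat.factorial N₁ : ℝ) * (n.choose N₁ : ℝ) := by ring
        rw [← mul_lt_mul_iff_of_pos_right hfacpos]
        calc B * (n : ℝ) ^ N₀ * (m : ℝ) ^ N₁ * (2 ^ N₁ * (Nat.factorial N₁ : ℝ))
            = (B * (m : ℝ) ^ N₁ * 2 ^ N₁ * (Nat.factorial N₁ : ℝ)) * (n : ℝ) ^ N₀ := by ring
          _ < (c * n) * (n : ℝ) ^ N₀ := by
              apply mul_lt_mul_of_pos_right h3 (by positivity)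
          _ = c * (n : ℝ) ^ N₁ := by rw [hN₁, pow_succ]; ring
          _ ≤ c * (2 ^ N₁ * (Nat.factorial N₁ : ℝ) * (n.choose N₁ : ℝ)) :=
              mul_le_mul_of_nonneg_left hA hc.le
          _ = c * (n.choose N₁ : ℝ) * (2 ^ N₁ * (Nat.factorial N₁ : ℝ)) := by ring
      -- multiply hG by m^(n-N₁)
      have hmp : (0 : ℝ) < (m : ℝ) ^ (n - N₁) := by positivity
      have hfinal := mul_lt_mul_of_pos_right hG hmp
      have hmn : (m : ℝ) ^ N₁ * (m : ℝ) ^ (n - N₁) = (m : ℝ) ^ n := by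
        rw [← pow_add]
        congr 1
        omega
      have e1 : K * B = B * (n : ℝ) ^ N₀ * (m : ℝ) ^ N₁ * (m : ℝ) ^ (n - N₁) := by
        rw [hKdef]; push_cast
        rw [mul_assoc, mul_assoc, hmn]; ring
      have e2 : ((n.choose N₁ * m ^ (n - N₁) : ℕ) : ℝ) * c
          = c * (n.choose N₁ : ℝ) * (m : ℝ) ^ (n - N₁) := by push_cast; ring
      rw [e1, e2]
      exact hfinal
    linarith
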